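/- Let c > 0, d > 0, r > 0, T > 0. Define erf(z) = (2/√π)·∫₀^z e^{−t²} dt, φ(x) = (e^{√(c/d)·x}/2)·(1 + erf( −x/(2√(dT)) − √(cT) )), C₀ = (1/(2r))·√(π/(2dc)), and K(x) = C₀·(φ(x) + φ(−x)). Define D₀ = 1 − erf(√(cT)) and D₂ = c·D₀/(2d) − √(c/(πT))·e^{−cT}/(2d). Then lim_{x→0} ( K(x) − C₀·(D₀ + D₂·x²) ) / x³ = 0; in particular K(0) = C₀·(1 − erf(√(cT))). -/

import Mathlib

open MeasureTheory

/-- The Gauss error function. -/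
noncomputable def erf (z : ℝ) : ℝ :=
  (2 / Real.sqrt Real.pi) * ∫ t in (0 : ℝ)..z, Real.exp (-t ^ 2)

noncomputable def gaussF (z : ℝ) : ℝ := 2 / Real.sqrt Real.pi * Real.exp (-z ^ 2)

lemma hasDerivAt_erf (z : ℝ) : HasDerivAt erf (gaussF z) z := by
  have hcont : Continuous fun t : ℝ => Real.exp (-t ^ 2) := by continuity
  have h := ((hcont.integral_hasStrictDerivAt 0 z).hasDerivAt).const_mul
    (2 / Real.sqrt Real.pi)
  have : HasDerivAt erf (2 / Real.sqrt Real.pi * Real.exp (-z ^ 2)) z := h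
  simpa [gaussF] using this

lemma erf_neg (z : ℝ) : erf (-z) = - erf z := by
  unfold erf
  have h := intervalIntegral.integral_comp_neg (a := (0 : ℝ)) (b := z)
    (fun t : ℝ => Real.exp (-t ^ 2))
  simp only [neg_sq, neg_zero] at h
  have e1 := intervalIntegral.integral_symm (f := fun t : ℝ => Real.exp (-t ^ 2))
    (μ := volume) 0 (-z)
  have e2 := intervalIntegral.integral_symm (f := fun t : ℝ => Real.exp (-t ^ 2))
    (μ := volume) 0 z
  have h2 : ∫ t in (0:ℝ)..(-z), Real.exp (-t ^ 2) = -∫ t in (0:ℝ)..z, Real.exp (-t ^ 2) := by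
    linarith [h, e1, e2]
  rw [h2]
  ring

@[continuity, fun_prop] lemma continuous_erf : Continuous erf := by
  have hdiff : Differentiable ℝ erf := fun z => (hasDerivAt_erf z).differentiableAt
  exact hdiff.continuous

@[continuity, fun_prop] lemma continuous_gaussF : Continuous gaussF := by
  unfold gaussF; continuity

lemma hasDerivAt_gaussF (z : ℝ) : HasDerivAt gaussF (gaussF z * (-2 * z)) z := by
  have h1 : HasDerivAt (fun y : ℝ => -(y ^ 2)) (-(2 * z)) z := by
    have := (hasDerivAt_pow 2 z).neg
    simp at this
    exact this
  have h := (h1.exp).const_mul (2 / Real.sqrt Real.pi)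
  have h2 : HasDerivAt gaussF (2 / Real.sqrt Real.pi * (Real.exp (-z ^ 2) * -(2 * z))) z := h
  convert h2 using 1
  unfold gaussF; ring

noncomputable def F0 (σ τ v x : ℝ) : ℝ := Real.exp (σ * x) / 2 * (1 + erf (τ * x + v))
noncomputable def F1 (σ τ v x : ℝ) : ℝ :=
  σ * F0 σ τ v x + τ * (Real.exp (σ * x) / 2 * gaussF (τ * x + v))
noncomputable def F2 (σ τ v x : ℝ) : ℝ :=
  σ * F1 σ τ v x +
    τ * (Real.exp (σ * x) / 2 * gaussF (τ * x + v) * (σ - 2 * τ * (τ * x + v)))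
noncomputable def F3 (σ τ v x : ℝ) : ℝ :=
  σ * F2 σ τ v x +
    τ * (Real.exp (σ * x) / 2 * gaussF (τ * x + v) *
      ((σ - 2 * τ * (τ * x + v)) ^ 2 - 2 * τ ^ 2))

section derivs

variable (σ τ v x : ℝ)

lemma hasDerivAt_E : HasDerivAt (fun y : ℝ => Real.exp (σ * y) / 2)
    (σ * (Real.exp (σ * x) / 2)) x := by
  have h1 : HasDerivAt (fun y : ℝ => σ * y) σ x := by
    simpa using (hasDerivAt_id x).const_mul σ
  have := (h1.exp).div_const 2
  exact this.congr_deriv (by ring)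

lemma hasDerivAt_u : HasDerivAt (fun y : ℝ => τ * y + v) τ x := by
  simpa using ((hasDerivAt_id x).const_mul τ).add_const v

lemma hasDerivAt_G : HasDerivAt (fun y : ℝ => gaussF (τ * y + v))
    (gaussF (τ * x + v) * (-2 * (τ * x + v)) * τ) x :=
  (hasDerivAt_gaussF (τ * x + v)).comp (h := fun y => τ * y + v) x (hasDerivAt_u τ v x)

lemma hasDerivAt_F0 : HasDerivAt (F0 σ τ v) (F1 σ τ v x) x := by
  have herf : HasDerivAt (fun y : ℝ => 1 + erf (τ * y + v))
      (gaussF (τ * x + v) * τ) x :=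
    ((hasDerivAt_erf (τ * x + v)).comp (h := fun y => τ * y + v) x (hasDerivAt_u τ v x)).const_add 1
  have h := (hasDerivAt_E σ x).mul herf
  have h2 : HasDerivAt (fun y : ℝ => Real.exp (σ * y) / 2 * (1 + erf (τ * y + v)))
      (σ * (Real.exp (σ * x) / 2) * (1 + erf (τ * x + v)) +
        Real.exp (σ * x) / 2 * (gaussF (τ * x + v) * τ)) x := h
  have heq : F1 σ τ v x =
      σ * (Real.exp (σ * x) / 2) * (1 + erf (τ * x + v)) +
        Real.exp (σ * x) / 2 * (gaussF (τ * x + v) * τ) := by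
    unfold F1 F0; ring
  rw [heq]
  exact h2

lemma hasDerivAt_F1 : HasDerivAt (F1 σ τ v) (F2 σ τ v x) x := by
  have hEG := (hasDerivAt_E σ x).mul (hasDerivAt_G τ v x)
  have h := ((hasDerivAt_F0 σ τ v x).const_mul σ).add (hEG.const_mul τ)
  have h2 : HasDerivAt
      (fun y : ℝ => σ * F0 σ τ v y + τ * (Real.exp (σ * y) / 2 * gaussF (τ * y + v)))
      (σ * F1 σ τ v x +
        τ * (σ * (Real.exp (σ * x) / 2) * gaussF (τ * x + v) +
          Real.exp (σ * x) / 2 * (gaussF (τ * x + v) * (-2 * (τ * x + v)) * τ))) x := h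
  have heq : F2 σ τ v x =
      σ * F1 σ τ v x +
        τ * (σ * (Real.exp (σ * x) / 2) * gaussF (τ * x + v) +
          Real.exp (σ * x) / 2 * (gaussF (τ * x + v) * (-2 * (τ * x + v)) * τ)) := by
    unfold F2; ring
  rw [heq]
  exact h2

lemma hasDerivAt_F2 : HasDerivAt (F2 σ τ v) (F3 σ τ v x) x := by
  have hh : HasDerivAt (fun y : ℝ => σ - 2 * τ * (τ * y + v)) (-(2 * τ * τ)) x := by
    simpa using ((hasDerivAt_u τ v x).const_mul (2 * τ)).const_sub σ
  have hEG := (hasDerivAt_E σ x).mul (hasDerivAt_G τ v x)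
  have h := ((hasDerivAt_F1 σ τ v x).const_mul σ).add ((hEG.mul hh).const_mul τ)
  have h2 : HasDerivAt
      (fun y : ℝ => σ * F1 σ τ v y +
        τ * (Real.exp (σ * y) / 2 * gaussF (τ * y + v) * (σ - 2 * τ * (τ * y + v))))
      (σ * F2 σ τ v x +
        τ * ((σ * (Real.exp (σ * x) / 2) * gaussF (τ * x + v) +
            Real.exp (σ * x) / 2 * (gaussF (τ * x + v) * (-2 * (τ * x + v)) * τ)) *
            (σ - 2 * τ * (τ * x + v)) +
          Real.exp (σ * x) / 2 * gaussF (τ * x + v) * -(2 * τ * τ))) x := h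
  have heq : F3 σ τ v x =
      σ * F2 σ τ v x +
        τ * ((σ * (Real.exp (σ * x) / 2) * gaussF (τ * x + v) +
            Real.exp (σ * x) / 2 * (gaussF (τ * x + v) * (-2 * (τ * x + v)) * τ)) *
            (σ - 2 * τ * (τ * x + v)) +
          Real.exp (σ * x) / 2 * gaussF (τ * x + v) * -(2 * τ * τ)) := by
    unfold F3; ring
  rw [heq]
  exact h2

lemma continuous_F3 : Continuous (F3 σ τ v) := by
  unfold F3 F2 F1 F0
  fun_prop

end derivs

theorem stmt18 (c d r T : ℝ) (hc : 0 < c) (hd : 0 < d) (hr : 0 < r) (hT : 0 < T)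
    (φ K : ℝ → ℝ) (C₀ D₀ D₂ : ℝ)
    (hφ : ∀ x : ℝ, φ x =
      (Real.exp (Real.sqrt (c / d) * x) / 2) *
        (1 + erf (-(x / (2 * Real.sqrt (d * T))) - Real.sqrt (c * T))))
    (hC₀ : C₀ = (1 / (2 * r)) * Real.sqrt (Real.pi / (2 * d * c)))
    (hK : ∀ x : ℝ, K x = C₀ * (φ x + φ (-x)))
    (hD₀ : D₀ = 1 - erf (Real.sqrt (c * T)))
    (hD₂ : D₂ = c * D₀ / (2 * d) -
      Real.sqrt (c / (Real.pi * T)) * Real.exp (-(c * T)) / (2 * d)) :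
    Filter.Tendsto (fun x : ℝ => (K x - C₀ * (D₀ + D₂ * x ^ 2)) / x ^ 3)
      (nhdsWithin 0 {(0 : ℝ)}ᶜ) (nhds 0) ∧
    K 0 = C₀ * (1 - erf (Real.sqrt (c * T))) := by
  have hπ : (0 : ℝ) < Real.pi := Real.pi_pos
  set A : ℝ := Real.sqrt (c / d) with hA_def
  set B : ℝ := 2 * Real.sqrt (d * T) with hB_def
  set s : ℝ := Real.sqrt (c * T) with hs_def
  -- rewrite φ in terms of F0
  have hφ1 : ∀ x : ℝ, φ x = F0 A (-1 / B) (-s) x := by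
    intro x
    rw [hφ]
    unfold F0
    have : -1 / B * x + -s = -(x / (2 * Real.sqrt (d * T))) - s := by
      rw [hB_def]; ring
    rw [this]
  have hφ2 : ∀ x : ℝ, φ (-x) = F0 (-A) (1 / B) (-s) x := by
    intro x
    rw [hφ]
    unfold F0
    have h1 : Real.sqrt (c / d) * -x = -A * x := by rw [hA_def]; ring
    have h2 : 1 / B * x + -s = -(-x / (2 * Real.sqrt (d * T))) - s := by
      rw [hB_def]; ring
    rw [h1, h2]
  -- the combined functions
  set q : ℝ → ℝ := fun x => F0 A (-1 / B) (-s) x + F0 (-A) (1 / B) (-s) x with hq_def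
  set q1 : ℝ → ℝ := fun x => F1 A (-1 / B) (-s) x + F1 (-A) (1 / B) (-s) x with hq1_def
  set q2 : ℝ → ℝ := fun x => F2 A (-1 / B) (-s) x + F2 (-A) (1 / B) (-s) x with hq2_def
  set q3 : ℝ → ℝ := fun x => F3 A (-1 / B) (-s) x + F3 (-A) (1 / B) (-s) x with hq3_def
  have hKq : ∀ x : ℝ, K x = C₀ * q x := by
    intro x; rw [hK, hφ1, hφ2, hq_def]
  -- derivatives
  have hdq : ∀ x : ℝ, HasDerivAt q (q1 x) x := fun x =>
    (hasDerivAt_F0 A (-1 / B) (-s) x).add (hasDerivAt_F0 (-A) (1 / B) (-s) x)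
  have hdq1 : ∀ x : ℝ, HasDerivAt q1 (q2 x) x := fun x =>
    (hasDerivAt_F1 A (-1 / B) (-s) x).add (hasDerivAt_F1 (-A) (1 / B) (-s) x)
  have hdq2 : ∀ x : ℝ, HasDerivAt q2 (q3 x) x := fun x =>
    (hasDerivAt_F2 A (-1 / B) (-s) x).add (hasDerivAt_F2 (-A) (1 / B) (-s) x)
  have hcq3 : Continuous q3 :=
    (continuous_F3 A (-1 / B) (-s)).add (continuous_F3 (-A) (1 / B) (-s))
  -- values at 0
  have herfneg : erf (-s) = -erf s := erf_neg s
  have hq0 : q 0 = D₀ := by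
    simp only [hq_def, F0, mul_zero, Real.exp_zero, zero_add, add_zero]
    rw [herfneg, hD₀]
    ring
  have hq10 : q1 0 = 0 := by
    simp only [hq1_def, F1, F0, mul_zero, Real.exp_zero, zero_add, add_zero]
    ring
  have hq30 : q3 0 = 0 := by
    simp only [hq3_def, F3, F2, F1, F0, mul_zero, Real.exp_zero, zero_add, add_zero]
    ring
  -- the sqrt algebra for q2 0
  set sc : ℝ := Real.sqrt c with hsc_def
  set sd : ℝ := Real.sqrt d with hsd_def
  set sT : ℝ := Real.sqrt T with hsT_def
  set sπ : ℝ := Real.sqrt Real.pi with hsπ_def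
  have hsc : sc ^ 2 = c := Real.sq_sqrt hc.le
  have hsd : sd ^ 2 = d := Real.sq_sqrt hd.le
  have hsT : sT ^ 2 = T := Real.sq_sqrt hT.le
  have hscpos : 0 < sc := Real.sqrt_pos.2 hc
  have hsdpos : 0 < sd := Real.sqrt_pos.2 hd
  have hsTpos : 0 < sT := Real.sqrt_pos.2 hT
  have hsπpos : 0 < sπ := Real.sqrt_pos.2 hπ
  have hA : A = sc / sd := by rw [hA_def, Real.sqrt_div hc.le, hsc_def, hsd_def]
  have hB : B = 2 * (sd * sT) := by
    rw [hB_def, Real.sqrt_mul hd.le, hsd_def, hsT_def]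
  have hs : s = sc * sT := by rw [hs_def, Real.sqrt_mul hc.le, hsc_def, hsT_def]
  have hπT : Real.sqrt (c / (Real.pi * T)) = sc / (sπ * sT) := by
    rw [Real.sqrt_div hc.le, Real.sqrt_mul hπ.le, hsc_def, hsπ_def, hsT_def]
  have hGs : gaussF (-s) = 2 / sπ * Real.exp (-(c * T)) := by
    unfold gaussF
    rw [neg_sq, hs_def, Real.sq_sqrt (by positivity), hsπ_def]
  have hq20 : q2 0 = 2 * D₂ := by
    simp only [hq2_def, F2, F1, F0, mul_zero, Real.exp_zero, zero_add, add_zero]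
    rw [herfneg, hGs, hD₂, hD₀, hπT, hA, hB, hs]
    rw [show c = sc ^ 2 from hsc.symm, show d = sd ^ 2 from hsd.symm]
    field_simp
    ring
  -- L'Hopital chain
  have hne : ∀ᶠ x : ℝ in nhdsWithin 0 {(0 : ℝ)}ᶜ, x ≠ 0 := by
    filter_upwards [self_mem_nhdsWithin] with x hx
    exact hx
  have hcq : Continuous q := continuous_iff_continuousAt.2 fun x => (hdq x).continuousAt
  have hcq1 : Continuous q1 := continuous_iff_continuousAt.2 fun x => (hdq1 x).continuousAt
  have hcq2 : Continuous q2 := continuous_iff_continuousAt.2 fun x => (hdq2 x).continuousAt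
  -- M, M1, M2, M3
  set M : ℝ → ℝ := fun x => q x - D₀ - D₂ * x ^ 2 with hM_def
  set M1 : ℝ → ℝ := fun x => q1 x - 2 * D₂ * x with hM1_def
  set M2 : ℝ → ℝ := fun x => q2 x - 2 * D₂ with hM2_def
  have hdM : ∀ x : ℝ, HasDerivAt M (M1 x) x := by
    intro x
    have h := ((hdq x).sub_const D₀).sub ((hasDerivAt_pow 2 x).const_mul D₂)
    have heq : M1 x = q1 x - D₂ * (↑2 * x ^ (2 - 1)) := by
      simp only [hM1_def]; push_cast; ring
    rw [heq]
    exact h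
  have hdM1 : ∀ x : ℝ, HasDerivAt M1 (M2 x) x := by
    intro x
    have h := (hdq1 x).sub ((hasDerivAt_id x).const_mul (2 * D₂))
    have heq : M2 x = q2 x - 2 * D₂ * 1 := by simp only [hM2_def]; ring
    rw [heq]
    exact h
  have hdM2 : ∀ x : ℝ, HasDerivAt M2 (q3 x) x := fun x => (hdq2 x).sub_const (2 * D₂)
  -- tendsto-to-zero facts
  have htM : Filter.Tendsto M (nhdsWithin 0 {(0 : ℝ)}ᶜ) (nhds 0) := by
    have h0 : M 0 = 0 := by simp [hM_def, hq0]
    have hMc : Continuous M := by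
      rw [hM_def]
      exact (hcq.sub continuous_const).sub ((continuous_const : Continuous fun _ : ℝ => D₂).mul (continuous_pow 2))
    have := hMc.tendsto 0
    rw [h0] at this
    exact this.mono_left nhdsWithin_le_nhds
  have htM1 : Filter.Tendsto M1 (nhdsWithin 0 {(0 : ℝ)}ᶜ) (nhds 0) := by
    have h0 : M1 0 = 0 := by simp [hM1_def, hq10]
    have hMc : Continuous M1 := by
      rw [hM1_def]
      exact hcq1.sub ((continuous_const : Continuous fun _ : ℝ => 2 * D₂).mul continuous_id)
    have := hMc.tendsto 0
    rw [h0] at this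
    exact this.mono_left nhdsWithin_le_nhds
  have htM2 : Filter.Tendsto M2 (nhdsWithin 0 {(0 : ℝ)}ᶜ) (nhds 0) := by
    have h0 : M2 0 = 0 := by simp [hM2_def, hq20]
    have hMc : Continuous M2 := by
      rw [hM2_def]
      exact hcq2.sub continuous_const
    have := hMc.tendsto 0
    rw [h0] at this
    exact this.mono_left nhdsWithin_le_nhds
  have htM3 : Filter.Tendsto (fun x : ℝ => q3 x / 6) (nhdsWithin 0 {(0 : ℝ)}ᶜ) (nhds 0) := by
    have := (hcq3.div_const 6).tendsto 0
    rw [show q3 0 / 6 = 0 by rw [hq30]; norm_num] at this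
    exact this.mono_left nhdsWithin_le_nhds
  -- step 1
  have step1 : Filter.Tendsto (fun x : ℝ => M2 x / (6 * x))
      (nhdsWithin 0 {(0 : ℝ)}ᶜ) (nhds 0) := by
    apply HasDerivAt.lhopital_zero_nhdsNE (f' := q3) (g' := fun _ : ℝ => (6 : ℝ))
    · exact Filter.Eventually.of_forall hdM2
    · exact Filter.Eventually.of_forall fun x => by
        simpa using (hasDerivAt_id x).const_mul (6 : ℝ)
    · exact Filter.Eventually.of_forall fun x => by norm_num
    · exact htM2
    · have h6 : Continuous fun x : ℝ => 6 * x := by fun_prop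
      have := h6.tendsto 0
      rw [show (6 : ℝ) * (0 : ℝ) = 0 by norm_num] at this
      exact this.mono_left nhdsWithin_le_nhds
    · exact htM3
  -- step 2
  have step2 : Filter.Tendsto (fun x : ℝ => M1 x / (3 * x ^ 2))
      (nhdsWithin 0 {(0 : ℝ)}ᶜ) (nhds 0) := by
    apply HasDerivAt.lhopital_zero_nhdsNE (f' := M2) (g' := fun x : ℝ => 6 * x)
    · exact Filter.Eventually.of_forall hdM1
    · exact Filter.Eventually.of_forall fun x => by
        have := (hasDerivAt_pow 2 x).const_mul (3 : ℝ)
        exact this.congr_deriv (by push_cast; ring)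
    · filter_upwards [hne] with x hx
      simpa using hx
    · exact htM1
    · have h3 : Continuous fun x : ℝ => 3 * x ^ 2 := by fun_prop
      have := h3.tendsto 0
      rw [show (3 : ℝ) * (0 : ℝ) ^ 2 = 0 by norm_num] at this
      exact this.mono_left nhdsWithin_le_nhds
    · exact step1
  -- step 3
  have step3 : Filter.Tendsto (fun x : ℝ => M x / x ^ 3)
      (nhdsWithin 0 {(0 : ℝ)}ᶜ) (nhds 0) := by
    apply HasDerivAt.lhopital_zero_nhdsNE (f' := M1) (g' := fun x : ℝ => 3 * x ^ 2)
    · exact Filter.Eventually.of_forall hdM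
    · exact Filter.Eventually.of_forall fun x => by
        simpa using hasDerivAt_pow 3 x
    · filter_upwards [hne] with x hx
      positivity
    · exact htM
    · have := (continuous_pow 3).tendsto (0 : ℝ)
      rw [show (0 : ℝ) ^ 3 = 0 by norm_num] at this
      exact this.mono_left nhdsWithin_le_nhds
    · exact step2
  constructor
  · have h := step3.const_mul C₀
    rw [mul_zero] at h
    refine h.congr fun x => ?_
    rw [hKq x]
    simp only [hM_def]
    ring
  · rw [hKq 0, hq0, hD₀]
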